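/- Let n ≥ 2 and let (σ_H, g) be a normalized pair. Then for all a ∈ H(n) and b, b′ ∈ G(n−1): (i) g(z(a), w(b)) = ∏_{i=1}^{n−1} ∏_{j=1}^{n−1} g(v_{in}, u_j)^{a_{in} b_j}; (ii) g(v_{jn}, u_i) = g(u_n, v_{ij}) · g(v_{in}, u_j) for all 1 ≤ i < j ≤ n−1; (iii) g(w(a), z(b)) = ∏_{1≤i<j≤n−1} g(u_n, v_{ij})^{a_n b_{ij}} = ∏_{1≤i<j≤n−1} (g(v_{in}, u_j)⁻¹ g(v_{jn}, u_i))^{a_n b_{ij}}; (iv) g(a, bb′) = (∏_{i=1}^{n−1} ∏_{j=1}^{n−1} g(v_{in}, u_j)^{b′_i b_j a_n}) · g(a,b) · g(a,b′). -/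

import Mathlib

open scoped BigOperators

namespace FreeNilp

/-- Index set for pairs `(j,k)` with `j < k`. -/
abbrev PairIdx (n : ℕ) : Type := {p : Fin n × Fin n // p.1 < p.2}

/-- The free nilpotent group of class 2 and rank `n`, realized on
`ℤ^n × ℤ^{n(n-1)/2}`. -/
@[ext] structure G (n : ℕ) where
  u : Fin n → ℤ
  v : PairIdx n → ℤ

namespace G

instance (n : ℕ) : Group (G n) where
  mul r s := ⟨fun i => r.u i + s.u i, fun p => r.v p + s.v p + r.u p.1.1 * s.u p.1.2⟩
  one := ⟨fun _ => 0, fun _ => 0⟩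
  inv r := ⟨fun i => -r.u i, fun p => -r.v p + r.u p.1.1 * r.u p.1.2⟩
  mul_assoc r s t := by
    refine G.ext ?_ ?_ <;> funext x
    · show (r.u x + s.u x) + t.u x = r.u x + (s.u x + t.u x)
      ring
    · show (r.v x + s.v x + r.u x.1.1 * s.u x.1.2) + t.v x +
          (r.u x.1.1 + s.u x.1.1) * t.u x.1.2 =
        r.v x + (s.v x + t.v x + s.u x.1.1 * t.u x.1.2) +
          r.u x.1.1 * (s.u x.1.2 + t.u x.1.2)
      ring
  one_mul r := by
    refine G.ext ?_ ?_ <;> funext x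
    · show 0 + r.u x = r.u x
      ring
    · show 0 + r.v x + 0 * r.u x.1.2 = r.v x
      ring
  mul_one r := by
    refine G.ext ?_ ?_ <;> funext x
    · show r.u x + 0 = r.u x
      ring
    · show r.v x + 0 + r.u x.1.1 * 0 = r.v x
      ring
  inv_mul_cancel r := by
    refine G.ext ?_ ?_ <;> funext x
    · show -r.u x + r.u x = 0
      ring
    · show (-r.v x + r.u x.1.1 * r.u x.1.2) + r.v x + -r.u x.1.1 * r.u x.1.2 = 0
      ring

@[simp] lemma mul_u {n : ℕ} (r s : G n) (i : Fin n) : (r * s).u i = r.u i + s.u i := rfl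
@[simp] lemma mul_v {n : ℕ} (r s : G n) (p : PairIdx n) :
    (r * s).v p = r.v p + s.v p + r.u p.1.1 * s.u p.1.2 := rfl
@[simp] lemma one_u {n : ℕ} (i : Fin n) : (1 : G n).u i = 0 := rfl
@[simp] lemma one_v {n : ℕ} (p : PairIdx n) : (1 : G n).v p = 0 := rfl
@[simp] lemma inv_u {n : ℕ} (r : G n) (i : Fin n) : (r⁻¹).u i = -r.u i := rfl
@[simp] lemma inv_v {n : ℕ} (r : G n) (p : PairIdx n) :
    (r⁻¹).v p = -r.v p + r.u p.1.1 * r.u p.1.2 := rfl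

end G

/-- First-block coordinate `r_i`. -/
def uc {n : ℕ} (r : G n) (i : Fin n) : ℤ := r.u i

/-- Second-block coordinate `r_{jk}` (zero unless `j < k`). -/
def vc {n : ℕ} (r : G n) (j k : Fin n) : ℤ := if h : j < k then r.v ⟨(j, k), h⟩ else 0

/-- A multiplier (2-cocycle with values in the circle group) of a group. -/
def IsMultiplier {Γ : Type*} [Group Γ] (σ : Γ → Γ → Circle) : Prop :=
  (∀ r s t : Γ, σ r s * σ (r * s) t = σ r (s * t) * σ s t) ∧
  ∀ r : Γ, σ r 1 = 1 ∧ σ 1 r = 1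

/-- Similarity (cohomology) of multipliers. -/
def Similar {Γ : Type*} [Group Γ] (σ τ : Γ → Γ → Circle) : Prop :=
  ∃ β : Γ → Circle, ∀ r s : Γ, τ r s = β r * β s * (β (r * s))⁻¹ * σ r s

/-- The subgroup `H(n) ≅ ℤⁿ` of `G n`: only the coordinates `r_n` and `r_{jn}` may
be nonzero. -/
def Hsub (n : ℕ) : Subgroup (G n) where
  carrier := {r | (∀ i : Fin n, (i : ℕ) + 1 < n → r.u i = 0) ∧
                  ∀ p : PairIdx n, (p.1.2 : ℕ) + 1 < n → r.v p = 0}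
  one_mem' := ⟨fun _ _ => rfl, fun _ _ => rfl⟩
  mul_mem' := by
    rintro r s ⟨hr1, hr2⟩ ⟨hs1, hs2⟩
    refine ⟨fun i hi => ?_, fun p hp => ?_⟩
    · simp [hr1 i hi, hs1 i hi]
    · simp [hr2 p hp, hs2 p hp, hs1 p.1.2 hp]
  inv_mem' := by
    rintro r ⟨hr1, hr2⟩
    refine ⟨fun i hi => ?_, fun p hp => ?_⟩
    · simp [hr1 i hi]
    · simp [hr2 p hp, hr1 p.1.2 hp]

/-- The subgroup `G(n-1)` of `G n`: the coordinates `r_n` and `r_{jn}` vanish. -/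
def Gsub (n : ℕ) : Subgroup (G n) where
  carrier := {r | (∀ i : Fin n, (i : ℕ) + 1 = n → r.u i = 0) ∧
                  ∀ p : PairIdx n, (p.1.2 : ℕ) + 1 = n → r.v p = 0}
  one_mem' := ⟨fun _ _ => rfl, fun _ _ => rfl⟩
  mul_mem' := by
    rintro r s ⟨hr1, hr2⟩ ⟨hs1, hs2⟩
    refine ⟨fun i hi => ?_, fun p hp => ?_⟩
    · simp [hr1 i hi, hs1 i hi]
    · simp [hr2 p hp, hs2 p hp, hs1 p.1.2 hp]
  inv_mem' := by
    rintro r ⟨hr1, hr2⟩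
    refine ⟨fun i hi => ?_, fun p hp => ?_⟩
    · simp [hr1 i hi]
    · simp [hr2 p hp, hr1 p.1.2 hp]

lemma mem_Hsub_iff {n : ℕ} {r : G n} :
    r ∈ Hsub n ↔ (∀ i : Fin n, (i : ℕ) + 1 < n → r.u i = 0) ∧
      ∀ p : PairIdx n, (p.1.2 : ℕ) + 1 < n → r.v p = 0 := Iff.rfl

lemma mem_Gsub_iff {n : ℕ} {r : G n} :
    r ∈ Gsub n ↔ (∀ i : Fin n, (i : ℕ) + 1 = n → r.u i = 0) ∧
      ∀ p : PairIdx n, (p.1.2 : ℕ) + 1 = n → r.v p = 0 := Iff.rfl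

/-- `H(n)` is a normal subgroup; conjugation preserves it. -/
lemma conj_mem_Hsub {n : ℕ} (s : G n) {a : G n} (ha : a ∈ Hsub n) :
    s * a * s⁻¹ ∈ Hsub n := by
  obtain ⟨ha1, ha2⟩ := ha
  refine ⟨fun i hi => ?_, fun p hp => ?_⟩
  · simp [ha1 i hi]
  · have hj : (p.1.1 : ℕ) + 1 < n := by
      have h2 : (p.1.1 : ℕ) < (p.1.2 : ℕ) := p.2
      omega
    simp [ha2 p hp, ha1 p.1.2 hp, ha1 p.1.1 hj]

/-- The action `α_b(a) = b a b⁻¹` of `G(n-1)` on `H(n)`. -/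
def conjH {n : ℕ} (b : Gsub n) (a : Hsub n) : Hsub n :=
  ⟨(b : G n) * (a : G n) * (b : G n)⁻¹, conj_mem_Hsub _ a.2⟩

/-- The `H(n)`-part of the unique factorization `r = a·b`, `a ∈ H(n)`, `b ∈ G(n-1)`. -/
def hpart {n : ℕ} (r : G n) : Hsub n :=
  ⟨⟨fun i => if (i : ℕ) + 1 = n then r.u i else 0,
    fun p => if (p.1.2 : ℕ) + 1 = n then r.v p else 0⟩, by
    refine ⟨fun i hi => ?_, fun p hp => ?_⟩
    · exact if_neg (by omega)
    · exact if_neg (by omega)⟩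

/-- The `G(n-1)`-part of the unique factorization `r = a·b`. -/
def gpart {n : ℕ} (r : G n) : Gsub n :=
  ⟨⟨fun i => if (i : ℕ) + 1 = n then 0 else r.u i,
    fun p => if (p.1.2 : ℕ) + 1 = n then 0 else r.v p⟩, by
    refine ⟨fun i hi => ?_, fun p hp => ?_⟩
    · exact if_pos hi
    · exact if_pos hp⟩

/-- `r` indeed factors as `hpart r * gpart r`. -/
lemma hpart_mul_gpart {n : ℕ} (r : G n) : ((hpart r : G n)) * (gpart r : G n) = r := by
  refine G.ext ?_ ?_ <;> funext x
  · show (if ((x : ℕ)) + 1 = n then r.u x else 0) + (if (x : ℕ) + 1 = n then 0 else r.u x) = r.u x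
    split <;> ring
  · show (if ((x.1.2 : ℕ)) + 1 = n then r.v x else 0) +
      (if (x.1.2 : ℕ) + 1 = n then 0 else r.v x) +
      (if ((x.1.1 : ℕ)) + 1 = n then r.u x.1.1 else 0) *
        (if (x.1.2 : ℕ) + 1 = n then 0 else r.u x.1.2) = r.v x
    have h2 : (x.1.1 : ℕ) < (x.1.2 : ℕ) := x.2
    have h3 : (x.1.2 : ℕ) < n := x.1.2.isLt
    rcases eq_or_ne ((x.1.2 : ℕ) + 1) n with h | h
    · rw [if_pos h, if_pos h, if_pos h, if_neg (by omega)]; ring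
    · rw [if_neg h, if_neg h, if_neg h, if_neg (show ¬((x.1.1 : ℕ) + 1 = n) by omega)]
      ring

/-- An admissible pair `(σ_H, g)` (Mackey data with trivial multiplier on `G(n-1)`). -/
structure AdmissiblePair (n : ℕ) (σH : Hsub n → Hsub n → Circle)
    (g : Hsub n → Gsub n → Circle) : Prop where
  multH : IsMultiplier σH
  g_one_right : ∀ a : Hsub n, g a 1 = 1
  g_one_left : ∀ b : Gsub n, g 1 b = 1
  g_add : ∀ (a a' : Hsub n) (b : Gsub n),
    g (a * a') b = σH (conjH b a) (conjH b a') * (σH a a')⁻¹ * (g a b * g a' b)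
  g_mul : ∀ (a : Hsub n) (b b' : Gsub n), g a (b * b') = g (conjH b' a) b * g a b'

/-- An admissible triple `(σ_H, g, σ')`. -/
def AdmissibleTriple (n : ℕ) (σH : Hsub n → Hsub n → Circle)
    (g : Hsub n → Gsub n → Circle) (σ' : Gsub n → Gsub n → Circle) : Prop :=
  AdmissiblePair n σH g ∧ IsMultiplier σ'

/-- The map `σ_n(a′b, ab′) = σ_H(a′, α_b(a)) g(a,b) σ′(b,b′)` defined via the unique
factorizations. -/
noncomputable def sigmaN {n : ℕ} (σH : Hsub n → Hsub n → Circle) (g : Hsub n → Gsub n → Circle)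
    (σ' : Gsub n → Gsub n → Circle) (r s : G n) : Circle :=
  σH (hpart r) (conjH (gpart r) (hpart s)) * g (hpart s) (gpart r) *
    σ' (gpart r) (gpart s)

/-- The map `τ(a′b, ab′) = σ_H(a′, α_b(a)) g(a,b)` defined via the unique factorizations. -/
noncomputable def tauN {n : ℕ} (σH : Hsub n → Hsub n → Circle) (g : Hsub n → Gsub n → Circle)
    (r s : G n) : Circle :=
  σH (hpart r) (conjH (gpart r) (hpart s)) * g (hpart s) (gpart r)

/-- The generator `u_i`. -/
def uE {n : ℕ} (i : Fin n) : G n := ⟨fun j => if j = i then 1 else 0, fun _ => 0⟩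

/-- The generator `v_{jk}`. -/
def vE {n : ℕ} (j k : Fin n) : G n := ⟨fun _ => 0, fun p => if p.1 = (j, k) then 1 else 0⟩

/-- The last index `n` (i.e. `n-1` in `Fin n`). -/
def lastI (n : ℕ) (hn : 0 < n) : Fin n := ⟨n - 1, by omega⟩

/-- `u_n` as an element of `H(n)`. -/
def unH {n : ℕ} (hn : 0 < n) : Hsub n :=
  ⟨uE (lastI n hn), by
    refine ⟨fun i hi => ?_, fun p hp => rfl⟩
    have h : i ≠ lastI n hn := by
      intro h; apply absurd hi; rw [h]; show ¬ (n - 1) + 1 < n; omega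
    simp [uE, h]⟩

/-- `u_i` (for `i < n`) as an element of `G(n-1)`. -/
def uiG {n : ℕ} (i : Fin n) (hi : (i : ℕ) + 1 < n) : Gsub n :=
  ⟨uE i, by
    refine ⟨fun j hj => ?_, fun p hp => rfl⟩
    have h : j ≠ i := by intro h; rw [h] at hj; omega
    simp [uE, h]⟩

/-- `v_{in}` (for `i < n`) as an element of `H(n)`. -/
def vinH {n : ℕ} (i : Fin n) (hi : (i : ℕ) + 1 < n) : Hsub n :=
  ⟨vE i (lastI n (by omega)), by
    refine ⟨fun j hj => rfl, fun p hp => ?_⟩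
    have h : p.1 ≠ (i, lastI n (by omega)) := by
      intro h
      have h2 : (p.1.2 : ℕ) = n - 1 := by rw [h]; rfl
      omega
    simp [vE, h]⟩

/-- `v_{ij}` (for `j < n`) as an element of `G(n-1)`. -/
def vijG {n : ℕ} (i j : Fin n) (hj : (j : ℕ) + 1 < n) : Gsub n :=
  ⟨vE i j, by
    refine ⟨fun k hk => rfl, fun p hp => ?_⟩
    have h : p.1 ≠ (i, j) := by
      intro h
      have h2 : (p.1.2 : ℕ) = (j : ℕ) := by rw [h]
      omega
    simp [vE, h]⟩

/-- The "word part" `w(a)` of `a ∈ H(n)`. -/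
def wH {n : ℕ} (a : Hsub n) : Hsub n :=
  ⟨⟨(a : G n).u, fun _ => 0⟩,
    ⟨fun i hi => (mem_Hsub_iff.mp a.2).1 i hi, fun _ _ => rfl⟩⟩

/-- The "central part" `z(a)` of `a ∈ H(n)`. -/
def zH {n : ℕ} (a : Hsub n) : Hsub n :=
  ⟨⟨fun _ => 0, (a : G n).v⟩,
    ⟨fun _ _ => rfl, fun p hp => (mem_Hsub_iff.mp a.2).2 p hp⟩⟩

/-- The "word part" `w(b)` of `b ∈ G(n-1)`. -/
def wG {n : ℕ} (b : Gsub n) : Gsub n :=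
  ⟨⟨(b : G n).u, fun _ => 0⟩,
    ⟨fun i hi => (mem_Gsub_iff.mp b.2).1 i hi, fun _ _ => rfl⟩⟩

/-- The "central part" `z(b)` of `b ∈ G(n-1)`. -/
def zG {n : ℕ} (b : Gsub n) : Gsub n :=
  ⟨⟨fun _ => 0, (b : G n).v⟩,
    ⟨fun _ _ => rfl, fun p hp => (mem_Gsub_iff.mp b.2).2 p hp⟩⟩

/-- `g(v_{in}, u_j)`, as a total function (equal to `1` outside the admissible range). -/
noncomputable def gvu {n : ℕ} (g : Hsub n → Gsub n → Circle) (i j : Fin n) : Circle :=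
  if h : (i : ℕ) + 1 < n ∧ (j : ℕ) + 1 < n then g (vinH i h.1) (uiG j h.2) else 1

/-- `g(u_n, v_{ij})`, as a total function (equal to `1` outside the admissible range). -/
noncomputable def guv {n : ℕ} (g : Hsub n → Gsub n → Circle) (i j : Fin n) : Circle :=
  if h : (j : ℕ) + 1 < n then g (unH (by omega)) (vijG i j h) else 1

/-- A normalized pair `(σ_H, g)`: admissible, with `σ_H` of the standard `λ`-form, and
`g(u_n, u_i) = 1` for all `1 ≤ i ≤ n-1`. -/
def Normalized {n : ℕ} (hn : 0 < n) (σH : Hsub n → Hsub n → Circle)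
    (g : Hsub n → Gsub n → Circle) (lam : Fin n → Circle) : Prop :=
  AdmissiblePair n σH g ∧
  (∀ a' a : Hsub n, σH a' a =
    ∏ i ∈ Finset.univ.filter (fun i : Fin n => (i : ℕ) + 1 < n),
      lam i ^ (uc (a' : G n) (lastI n hn) * vc (a : G n) i (lastI n hn))) ∧
  ∀ (i : Fin n) (hi : (i : ℕ) + 1 < n), g (unH hn) (uiG i hi) = 1

/-- The multiplier `σ_λ` of `G n` attached to a family of parameters
`λ_{i,jk} ∈ 𝕋` (`1 ≤ i ≤ k`, `1 ≤ j < k ≤ n`). -/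
noncomputable def sigmaLam {n : ℕ} (lam : Fin n → Fin n → Fin n → Circle) (r s : G n) : Circle :=
  (∏ t ∈ Finset.univ.filter
      (fun t : Fin n × Fin n × Fin n => t.1 < t.2.1 ∧ t.2.1 < t.2.2),
    lam t.1 t.2.1 t.2.2 ^ (vc s t.2.1 t.2.2 * uc r t.1 + uc s t.2.2 * vc r t.1 t.2.1) *
    lam t.2.1 t.1 t.2.2 ^ (vc s t.1 t.2.2 * uc r t.2.1 +
      uc s t.2.2 * (uc r t.1 * uc r t.2.1 - vc r t.1 t.2.1))) *
  ∏ p ∈ Finset.univ.filter (fun p : Fin n × Fin n => p.1 < p.2),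
    lam p.1 p.1 p.2 ^ (vc s p.1 p.2 * uc r p.1 +
      uc s p.2 * (uc r p.1 * (uc r p.1 - 1) / 2)) *
    lam p.2 p.1 p.2 ^ (uc r p.2 * (vc s p.1 p.2 + uc r p.1 * uc s p.2) +
      uc r p.1 * (uc s p.2 * (uc s p.2 - 1) / 2))

/-- The extension of the parameter family to indices `i > k`, via
`λ_{k,ij} = λ_{i,jk}⁻¹ λ_{j,ik}` for `i < j < k`. -/
noncomputable def lamExt {n : ℕ} (lam : Fin n → Fin n → Fin n → Circle) (i j k : Fin n) : Circle :=
  if i ≤ k then lam i j k else (lam j k i)⁻¹ * lam k j i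

/-! ### Auxiliary lemmas for the proof -/

section AuxHom

variable {M : Type*} [CommGroup M]

lemma zhom_eq_zpow (χ : ℤ → M) (h : ∀ x y, χ (x + y) = χ x * χ y) (m : ℤ) :
    χ m = χ 1 ^ m := by
  have h0 : χ 0 = 1 := by
    have := h 0 0
    rw [add_zero] at this
    exact (left_eq_mul.mp this)
  have hneg : ∀ x, χ (-x) = (χ x)⁻¹ := by
    intro x
    have := h x (-x)
    rw [add_neg_cancel, h0] at this
    exact eq_inv_of_mul_eq_one_right this.symm
  induction m using Int.induction_on with
  | zero => simp [h0]
  | succ k ih =>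
    rw [h, ih, zpow_add, zpow_one]
  | pred k ih =>
    have hm : (-(k:ℤ) - 1) = -k + -1 := by ring
    rw [hm, h, ih, hneg 1]
    simp [zpow_add, zpow_neg]

lemma pihom_eq_prod {ι : Type*} [Fintype ι] [DecidableEq ι] (φ : (ι → ℤ) → M)
    (h : ∀ f f', φ (f + f') = φ f * φ f') (f : ι → ℤ) :
    φ f = ∏ i, φ (Pi.single i 1) ^ f i := by
  have h0 : φ 0 = 1 := by
    have := h 0 0
    rw [add_zero] at this
    exact (left_eq_mul.mp this)
  have hsum : ∀ (s : Finset ι) (gg : ι → ι → ℤ),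
      φ (∑ i ∈ s, gg i) = ∏ i ∈ s, φ (gg i) := by
    intro s
    induction s using Finset.cons_induction with
    | empty => intro gg; simp [h0]
    | cons a s ha ih =>
      intro gg
      rw [Finset.sum_cons, h, ih, Finset.prod_cons]
  calc φ f = φ (∑ i, Pi.single i (f i)) := by rw [Finset.univ_sum_single]
    _ = ∏ i, φ (Pi.single i (f i)) := hsum _ _
    _ = ∏ i, φ (Pi.single i 1) ^ f i := by
        refine Finset.prod_congr rfl fun i _ => ?_
        exact zhom_eq_zpow (fun m => φ (Pi.single i m))
          (fun x y => by rw [← h, ← Pi.single_add]) (f i)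

end AuxHom

section CoordLemmas

variable {n : ℕ}

lemma conjH_coe_u (b : Gsub n) (a : Hsub n) (i : Fin n) :
    ((conjH b a : Hsub n) : G n).u i = (a : G n).u i := by
  show ((b : G n) * (a : G n) * (b : G n)⁻¹).u i = _
  simp

lemma conjH_coe_v (b : Gsub n) (a : Hsub n) (p : PairIdx n) :
    ((conjH b a : Hsub n) : G n).v p =
      (a : G n).v p + (b : G n).u p.1.1 * (a : G n).u p.1.2 := by
  have hp : ((p.1.1 : ℕ)) + 1 < n := by
    have h1 : (p.1.1 : ℕ) < (p.1.2 : ℕ) := p.2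
    have h2 : (p.1.2 : ℕ) < n := p.1.2.isLt
    omega
  have ha : (a : G n).u p.1.1 = 0 := (mem_Hsub_iff.mp a.2).1 p.1.1 hp
  show ((b : G n) * (a : G n) * (b : G n)⁻¹).v p = _
  simp [ha]
  ring

lemma conjH_of_b_u_zero {b : Gsub n} (hb : ∀ i, (b : G n).u i = 0) (a : Hsub n) :
    conjH b a = a := by
  refine Subtype.ext (G.ext ?_ ?_) <;> funext x
  · exact conjH_coe_u b a x
  · rw [conjH_coe_v, hb, zero_mul, add_zero]

end CoordLemmas

section Elements

variable {n : ℕ}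

/-- The `z`-element of `G(n-1)` with coordinates `f`. -/
def zGOf (f : PairIdx n → ℤ) : Gsub n :=
  ⟨⟨fun _ => 0, fun p => if (p.1.2 : ℕ) + 1 < n then f p else 0⟩,
    ⟨fun _ _ => rfl, fun p hp => if_neg (by omega)⟩⟩

/-- The `w`-element of `G(n-1)` with coordinates `f`. -/
def wGOf (f : Fin n → ℤ) : Gsub n :=
  ⟨⟨fun i => if (i : ℕ) + 1 < n then f i else 0, fun _ => 0⟩,
    ⟨fun i hi => if_neg (by omega), fun _ _ => rfl⟩⟩

/-- The `z`-element of `H(n)` with coordinates `f` (coordinate `f i` at pair `(i, n)`). -/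
def zHOf (f : Fin n → ℤ) : Hsub n :=
  ⟨⟨fun _ => 0, fun p => if (p.1.2 : ℕ) + 1 = n then f p.1.1 else 0⟩,
    ⟨fun _ _ => rfl, fun p hp => if_neg (by omega)⟩⟩

/-- The element `u_n ^ m` of `H(n)`. -/
def unHpow (m : ℤ) : Hsub n :=
  ⟨⟨fun i => if (i : ℕ) + 1 = n then m else 0, fun _ => 0⟩,
    ⟨fun i hi => if_neg (by omega), fun _ _ => rfl⟩⟩

lemma pair_ne (p : PairIdx n) : ¬(((p.1.1 : ℕ)) + 1 = n ∧ ((p.1.2 : ℕ)) + 1 = n) := by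
  rintro ⟨h1, h2⟩
  have h3 : (p.1.1 : ℕ) < (p.1.2 : ℕ) := p.2
  omega

lemma pair_fst_lt (p : PairIdx n) : ((p.1.1 : ℕ)) + 1 < n := by
  have h3 : (p.1.1 : ℕ) < (p.1.2 : ℕ) := p.2
  have h4 : (p.1.2 : ℕ) < n := p.1.2.isLt
  omega

lemma zGOf_add (f f' : PairIdx n → ℤ) : zGOf (f + f') = zGOf f * zGOf f' := by
  refine Subtype.ext (G.ext ?_ ?_) <;> funext x
  · show (0 : ℤ) = 0 + 0; ring
  · show (if (x.1.2 : ℕ) + 1 < n then f x + f' x else 0) =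
      (if (x.1.2 : ℕ) + 1 < n then f x else 0) +
      (if (x.1.2 : ℕ) + 1 < n then f' x else 0) + 0 * 0
    split <;> ring

lemma unHpow_add (m m' : ℤ) : unHpow (m + m') = (unHpow m : Hsub n) * unHpow m' := by
  refine Subtype.ext (G.ext ?_ ?_) <;> funext x
  · show (if (x : ℕ) + 1 = n then m + m' else 0) =
      (if (x : ℕ) + 1 = n then m else 0) + (if (x : ℕ) + 1 = n then m' else 0)
    split <;> ring
  · show (0 : ℤ) = 0 + 0 +
      (if (x.1.1 : ℕ) + 1 = n then m else 0) * (if (x.1.2 : ℕ) + 1 = n then m' else 0)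
    have := pair_fst_lt x
    rw [if_neg (by omega)]
    ring

lemma zHOf_add (f f' : Fin n → ℤ) : zHOf (f + f') = zHOf f * zHOf f' := by
  refine Subtype.ext (G.ext ?_ ?_) <;> funext x
  · show (0 : ℤ) = 0 + 0; ring
  · show (if (x.1.2 : ℕ) + 1 = n then f x.1.1 + f' x.1.1 else 0) =
      (if (x.1.2 : ℕ) + 1 = n then f x.1.1 else 0) +
      (if (x.1.2 : ℕ) + 1 = n then f' x.1.1 else 0) + 0 * 0
    split <;> ring

lemma wGOf_mul (f f' : Fin n → ℤ) :
    (wGOf f : Gsub n) * wGOf f' = wGOf (f + f') *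
      zGOf (fun p => (if (p.1.1 : ℕ) + 1 < n then f p.1.1 else 0) *
        (if (p.1.2 : ℕ) + 1 < n then f' p.1.2 else 0)) := by
  refine Subtype.ext (G.ext ?_ ?_) <;> funext x
  · show (if (x : ℕ) + 1 < n then f x else 0) + (if (x : ℕ) + 1 < n then f' x else 0) =
      (if (x : ℕ) + 1 < n then f x + f' x else 0) + 0
    split <;> ring
  · show (0 : ℤ) + 0 +
      (if (x.1.1 : ℕ) + 1 < n then f x.1.1 else 0) *
        (if (x.1.2 : ℕ) + 1 < n then f' x.1.2 else 0) =
      0 + (if (x.1.2 : ℕ) + 1 < n then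
        (if (x.1.1 : ℕ) + 1 < n then f x.1.1 else 0) *
          (if (x.1.2 : ℕ) + 1 < n then f' x.1.2 else 0) else 0) +
      (if (x.1.1 : ℕ) + 1 < n then f x.1.1 + f' x.1.1 else 0) * 0
    by_cases h : (x.1.2 : ℕ) + 1 < n
    · simp only [if_pos h]; ring
    · simp only [if_neg h]; ring

lemma decompG (b : Gsub n) :
    b = wGOf (fun i => (b : G n).u i) * zGOf (fun p => (b : G n).v p) := by
  obtain ⟨h1, h2⟩ := mem_Gsub_iff.mp b.2
  refine Subtype.ext (G.ext ?_ ?_) <;> funext x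
  · show (b : G n).u x = (if (x : ℕ) + 1 < n then (b : G n).u x else 0) + 0
    by_cases h : (x : ℕ) + 1 < n
    · rw [if_pos h]; ring
    · rw [if_neg h, h1 x (by have := x.isLt; omega)]; ring
  · show (b : G n).v x = 0 + (if (x.1.2 : ℕ) + 1 < n then (b : G n).v x else 0) +
      (if (x.1.1 : ℕ) + 1 < n then (b : G n).u x.1.1 else 0) * 0
    by_cases h : (x.1.2 : ℕ) + 1 < n
    · rw [if_pos h]; ring
    · rw [if_neg h, h2 x (by have := x.1.2.isLt; omega)]; ring

lemma zGOf_single_of_lt (p : PairIdx n) (hp : (p.1.2 : ℕ) + 1 < n) :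
    zGOf (Pi.single p 1) = vijG p.1.1 p.1.2 hp := by
  refine Subtype.ext (G.ext ?_ ?_) <;> funext x
  · rfl
  · show (if (x.1.2 : ℕ) + 1 < n then (Pi.single p (1 : ℤ) : PairIdx n → ℤ) x else 0) =
      (if x.1 = (p.1.1, p.1.2) then 1 else 0)
    have hx1 : x.1 = (p.1.1, p.1.2) ↔ x = p := by
      constructor
      · intro h; exact Subtype.ext h
      · intro h; rw [h]
    rw [Pi.single_apply]
    by_cases hxp : x = p
    · subst hxp
      rw [if_pos hp, if_pos rfl, if_pos (hx1.mpr rfl)]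
    · rw [if_neg hxp, if_neg (fun h => hxp (hx1.mp h))]
      split <;> rfl

lemma zGOf_single_of_eq (p : PairIdx n) (hp : ¬ (p.1.2 : ℕ) + 1 < n) :
    zGOf (Pi.single p (1:ℤ)) = 1 := by
  refine Subtype.ext (G.ext ?_ ?_) <;> funext x
  · rfl
  · show (if (x.1.2 : ℕ) + 1 < n then (Pi.single p (1 : ℤ) : PairIdx n → ℤ) x else 0) = 0
    rw [Pi.single_apply]
    split_ifs with h1 h2
    · exact absurd (h2 ▸ h1) hp
    · rfl
    · rfl

lemma wGOf_single_of_lt (i : Fin n) (hi : (i : ℕ) + 1 < n) :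
    wGOf (Pi.single i 1) = uiG i hi := by
  refine Subtype.ext (G.ext ?_ ?_) <;> funext x
  · show (if (x : ℕ) + 1 < n then (Pi.single i (1 : ℤ) : Fin n → ℤ) x else 0) =
      (if x = i then 1 else 0)
    rw [Pi.single_apply]
    by_cases hxi : x = i
    · subst hxi; rw [if_pos hi, if_pos rfl]
    · rw [if_neg hxi]; split <;> simp [hxi]
  · rfl

lemma wGOf_single_of_eq (i : Fin n) (hi : ¬ (i : ℕ) + 1 < n) :
    wGOf (Pi.single i (1:ℤ)) = 1 := by
  refine Subtype.ext (G.ext ?_ ?_) <;> funext x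
  · show (if (x : ℕ) + 1 < n then (Pi.single i (1 : ℤ) : Fin n → ℤ) x else 0) = 0
    rw [Pi.single_apply]
    split_ifs with h1 h2
    · exact absurd (h2 ▸ h1) hi
    · rfl
    · rfl
  · rfl

lemma zHOf_single_of_lt (hn : 0 < n) (i : Fin n) (hi : (i : ℕ) + 1 < n) :
    zHOf (Pi.single i 1) = vinH i hi := by
  refine Subtype.ext (G.ext ?_ ?_) <;> funext x
  · rfl
  · show (if (x.1.2 : ℕ) + 1 = n then (Pi.single i (1 : ℤ) : Fin n → ℤ) x.1.1 else 0) =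
      (if x.1 = (i, lastI n (by omega)) then 1 else 0)
    rw [Pi.single_apply]
    have hiff : x.1 = (i, lastI n (by omega)) ↔
        ((x.1.1 = i) ∧ (x.1.2 : ℕ) + 1 = n) := by
      constructor
      · intro h
        refine ⟨congrArg Prod.fst h, ?_⟩
        have : x.1.2 = lastI n (by omega) := congrArg Prod.snd h
        rw [this]; show (n - 1) + 1 = n; omega
      · rintro ⟨h1, h2⟩
        have : x.1.2 = lastI n (by omega) := by
          apply Fin.ext; show (x.1.2 : ℕ) = n - 1; omega
        calc x.1 = (x.1.1, x.1.2) := rfl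
          _ = (i, lastI n (by omega)) := Prod.ext h1 this
    by_cases h2 : (x.1.2 : ℕ) + 1 = n
    · rw [if_pos h2]
      by_cases h1 : x.1.1 = i
      · rw [if_pos h1, if_pos (hiff.mpr ⟨h1, h2⟩)]
      · rw [if_neg h1, if_neg (fun h => h1 (hiff.mp h).1)]
    · rw [if_neg h2, if_neg (fun h => h2 (hiff.mp h).2)]

lemma zHOf_single_of_eq (i : Fin n) (hi : ¬ (i : ℕ) + 1 < n) :
    zHOf (Pi.single i (1:ℤ)) = 1 := by
  refine Subtype.ext (G.ext ?_ ?_) <;> funext x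
  · rfl
  · show (if (x.1.2 : ℕ) + 1 = n then (Pi.single i (1 : ℤ) : Fin n → ℤ) x.1.1 else 0) = 0
    rw [Pi.single_apply]
    by_cases h2 : (x.1.2 : ℕ) + 1 = n
    · rw [if_pos h2]
      have h1 : x.1.1 ≠ i := by
        intro h
        have := pair_fst_lt x
        rw [h] at this
        have := x.1.1.isLt
        omega
      rw [if_neg h1]
    · rw [if_neg h2]

lemma zH_eq_zHOf (hn : 0 < n) (a : Hsub n) :
    zH a = zHOf (fun i => vc (a : G n) i (lastI n hn)) := by
  obtain ⟨h1, h2⟩ := mem_Hsub_iff.mp a.2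
  refine Subtype.ext (G.ext ?_ ?_) <;> funext x
  · rfl
  · show (a : G n).v x = (if (x.1.2 : ℕ) + 1 = n then vc (a : G n) x.1.1 (lastI n hn) else 0)
    by_cases h : (x.1.2 : ℕ) + 1 = n
    · rw [if_pos h]
      have hlt : x.1.1 < lastI n hn := by
        show (x.1.1 : ℕ) < n - 1
        have h3 : (x.1.1 : ℕ) < (x.1.2 : ℕ) := x.2
        omega
      rw [vc, dif_pos hlt]
      congr 1
      refine Subtype.ext ?_
      show x.1 = (x.1.1, lastI n hn)
      have hl : lastI n hn = x.1.2 := by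
        apply Fin.ext; show n - 1 = (x.1.2 : ℕ); omega
      rw [hl]
    · rw [if_neg h, h2 x (by have := x.1.2.isLt; omega)]

lemma zHOf_central (f : Fin n → ℤ) (i : Fin n) : ((zHOf f : Hsub n) : G n).u i = 0 := rfl

lemma zGOf_u_zero (f : PairIdx n → ℤ) (i : Fin n) : ((zGOf f : Gsub n) : G n).u i = 0 := rfl

lemma vc_zHOf_of_lt (hn : 0 < n) (f : Fin n → ℤ) (i : Fin n) (hi : (i : ℕ) + 1 < n) :
    vc ((zHOf f : Hsub n) : G n) i (lastI n hn) = f i := by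
  have hlt : i < lastI n hn := by show (i : ℕ) < n - 1; omega
  rw [vc, dif_pos hlt]
  show (if (n - 1) + 1 = n then f i else 0) = f i
  rw [if_pos (by omega)]

lemma vc_last_last (hn : 0 < n) (r : G n) (i : Fin n) (hi : ¬ (i : ℕ) + 1 < n) :
    vc r i (lastI n hn) = 0 := by
  rw [vc, dif_neg]
  show ¬ (i : ℕ) < n - 1
  omega

lemma conjH_eq_mul (hn : 0 < n) (b' : Gsub n) (a : Hsub n) :
    conjH b' a = a * zHOf (fun i => uc (b' : G n) i * uc (a : G n) (lastI n hn)) := by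
  obtain ⟨h1, h2⟩ := mem_Hsub_iff.mp a.2
  refine Subtype.ext (G.ext ?_ ?_) <;> funext x
  · rw [conjH_coe_u]
    show (a : G n).u x = (a : G n).u x + 0
    ring
  · rw [conjH_coe_v]
    show (a : G n).v x + (b' : G n).u x.1.1 * (a : G n).u x.1.2 =
      (a : G n).v x + (if (x.1.2 : ℕ) + 1 = n then
        uc (b' : G n) x.1.1 * uc (a : G n) (lastI n hn) else 0) + (a : G n).u x.1.1 * 0
    by_cases h : (x.1.2 : ℕ) + 1 = n
    · rw [if_pos h]
      have : x.1.2 = lastI n hn := by apply Fin.ext; show (x.1.2 : ℕ) = n - 1; omega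
      rw [this]
      show (a : G n).v x + (b' : G n).u x.1.1 * (a : G n).u (lastI n hn) =
        (a : G n).v x + (b' : G n).u x.1.1 * (a : G n).u (lastI n hn) + (a : G n).u x.1.1 * 0
      ring
    · rw [if_neg h, h1 x.1.2 (by have := x.1.2.isLt; omega)]
      ring

lemma wH_eq_unHpow (hn : 0 < n) (a : Hsub n) :
    wH a = unHpow (uc (a : G n) (lastI n hn)) := by
  obtain ⟨h1, h2⟩ := mem_Hsub_iff.mp a.2
  refine Subtype.ext (G.ext ?_ ?_) <;> funext x
  · show (a : G n).u x = (if (x : ℕ) + 1 = n then uc (a : G n) (lastI n hn) else 0)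
    by_cases h : (x : ℕ) + 1 = n
    · rw [if_pos h]
      have : x = lastI n hn := by apply Fin.ext; show (x : ℕ) = n - 1; omega
      rw [this]; rfl
    · rw [if_neg h, h1 x (by have := x.isLt; omega)]
  · rfl

lemma unHpow_one (hn : 0 < n) : (unHpow 1 : Hsub n) = unH hn := by
  refine Subtype.ext (G.ext ?_ ?_) <;> funext x
  · show (if (x : ℕ) + 1 = n then (1:ℤ) else 0) = (if x = lastI n hn then 1 else 0)
    have : (x : ℕ) + 1 = n ↔ x = lastI n hn := by
      constructor
      · intro h; apply Fin.ext; show (x : ℕ) = n - 1; omega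
      · intro h; rw [h]; show (n - 1) + 1 = n; omega
    by_cases h : (x : ℕ) + 1 = n
    · rw [if_pos h, if_pos (this.mp h)]
    · rw [if_neg h, if_neg (fun hh => h (this.mpr hh))]
  · rfl

lemma zG_eq_zGOf (b : Gsub n) : zG b = zGOf (fun p => (b : G n).v p) := by
  obtain ⟨h1, h2⟩ := mem_Gsub_iff.mp b.2
  refine Subtype.ext (G.ext ?_ ?_) <;> funext x
  · rfl
  · show (b : G n).v x = (if (x.1.2 : ℕ) + 1 < n then (b : G n).v x else 0)
    by_cases h : (x.1.2 : ℕ) + 1 < n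
    · rw [if_pos h]
    · rw [if_neg h, h2 x (by have := x.1.2.isLt; omega)]

end Elements

section ElemIdentities

variable {n : ℕ}

lemma vijG_comm (i j : Fin n) (hij : i < j) (hi : (i : ℕ) + 1 < n) (hj : (j : ℕ) + 1 < n) :
    vijG i j hj = uiG i hi * uiG j hj * (uiG i hi)⁻¹ * (uiG j hj)⁻¹ := by
  have hij' : (i : ℕ) < (j : ℕ) := hij
  refine Subtype.ext (G.ext ?_ ?_) <;> funext x
  · show (0 : ℤ) = (((if x = i then 1 else 0) + (if x = j then 1 else 0)) +
      -(if x = i then 1 else 0)) + -(if x = j then 1 else 0)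
    split_ifs <;> ring
  · have hx : (x.1.1 : ℕ) < (x.1.2 : ℕ) := x.2
    show (if x.1 = (i, j) then (1:ℤ) else 0) =
      ((0 + 0 + (if x.1.1 = i then 1 else 0) * (if x.1.2 = j then 1 else 0)) +
        (-0 + (if x.1.1 = i then 1 else 0) * (if x.1.2 = i then 1 else 0)) +
        ((if x.1.1 = i then 1 else 0) + (if x.1.1 = j then 1 else 0)) *
          -(if x.1.2 = i then 1 else 0)) +
      (-0 + (if x.1.1 = j then 1 else 0) * (if x.1.2 = j then 1 else 0)) +
      ((((if x.1.1 = i then 1 else 0) + (if x.1.1 = j then 1 else 0)) +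
        -(if x.1.1 = i then 1 else 0)) * -(if x.1.2 = j then 1 else 0))
    simp only [Prod.ext_iff, Fin.ext_iff]
    split_ifs <;> omega

lemma uiG_swap (i j : Fin n) (hij : i < j) (hi : (i : ℕ) + 1 < n) (hj : (j : ℕ) + 1 < n) :
    uiG i hi * uiG j hj = uiG j hj * uiG i hi * vijG i j hj := by
  have hij' : (i : ℕ) < (j : ℕ) := hij
  refine Subtype.ext (G.ext ?_ ?_) <;> funext x
  · show (if x = i then (1:ℤ) else 0) + (if x = j then 1 else 0) =
      ((if x = j then 1 else 0) + (if x = i then 1 else 0)) + 0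
    split_ifs <;> ring
  · have hx : (x.1.1 : ℕ) < (x.1.2 : ℕ) := x.2
    show (0 : ℤ) + 0 + (if x.1.1 = i then 1 else 0) * (if x.1.2 = j then 1 else 0) =
      (0 + 0 + (if x.1.1 = j then 1 else 0) * (if x.1.2 = i then 1 else 0)) +
        (if x.1 = (i, j) then 1 else 0) +
      ((if x.1.1 = j then 1 else 0) + (if x.1.1 = i then 1 else 0)) * 0
    simp only [Prod.ext_iff, Fin.ext_iff]
    split_ifs <;> omega

lemma conjH_unH (hn : 0 < n) (j : Fin n) (hj : (j : ℕ) + 1 < n) :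
    conjH (uiG j hj) (unH hn) = unH hn * vinH j hj := by
  refine Subtype.ext (G.ext ?_ ?_) <;> funext x
  · rw [conjH_coe_u]
    show ((unH hn : Hsub n) : G n).u x = ((unH hn : Hsub n) : G n).u x + 0
    ring
  · rw [conjH_coe_v]
    show (0:ℤ) + (if x.1.1 = j then 1 else 0) * (if x.1.2 = lastI n hn then 1 else 0) =
      0 + (if x.1 = (j, lastI n (by omega)) then 1 else 0) +
        (if x.1.1 = lastI n hn then 1 else 0) * 0
    have hx : (x.1.1 : ℕ) < (x.1.2 : ℕ) := x.2
    simp only [Prod.ext_iff, Fin.ext_iff]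
    split_ifs <;> omega

lemma conjH_vijG (hn : 0 < n) (i j : Fin n) (hj : (j : ℕ) + 1 < n) :
    conjH (vijG i j hj) (unH hn) = unH hn :=
  conjH_of_b_u_zero (fun _ => rfl) _

end ElemIdentities

section GLemmas

variable {n : ℕ}

lemma vc_conjH (hn : 0 < n) (b : Gsub n) (a : Hsub n) (i : Fin n) (hi : (i : ℕ) + 1 < n) :
    vc ((conjH b a : Hsub n) : G n) i (lastI n hn) =
      vc (a : G n) i (lastI n hn) + (b : G n).u i * (a : G n).u (lastI n hn) := by
  have hlt : i < lastI n hn := by show (i : ℕ) < n - 1; omega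
  rw [vc, vc, dif_pos hlt, dif_pos hlt, conjH_coe_v]

lemma g_add_formula (hn : 0 < n) (lam : Fin n → Circle)
    (σH : Hsub n → Hsub n → Circle) (g : Hsub n → Gsub n → Circle)
    (hadm : AdmissiblePair n σH g)
    (hσ : ∀ a' a : Hsub n, σH a' a =
      ∏ i ∈ Finset.univ.filter (fun i : Fin n => (i : ℕ) + 1 < n),
        lam i ^ (uc (a' : G n) (lastI n hn) * vc (a : G n) i (lastI n hn)))
    (a a' : Hsub n) (b : Gsub n) :
    g (a * a') b =
      (∏ i ∈ Finset.univ.filter (fun i : Fin n => (i : ℕ) + 1 < n),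
        lam i ^ (uc (a : G n) (lastI n hn) * (uc (b : G n) i * uc (a' : G n) (lastI n hn)))) *
      (g a b * g a' b) := by
  rw [hadm.g_add a a' b, hσ, hσ]
  congr 1
  have key : ∀ i ∈ Finset.univ.filter (fun i : Fin n => (i : ℕ) + 1 < n),
      lam i ^ (uc ((conjH b a : Hsub n) : G n) (lastI n hn) *
        vc ((conjH b a' : Hsub n) : G n) i (lastI n hn)) =
      lam i ^ (uc (a : G n) (lastI n hn) * vc (a' : G n) i (lastI n hn)) *
      lam i ^ (uc (a : G n) (lastI n hn) * (uc (b : G n) i * uc (a' : G n) (lastI n hn))) := by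
    intro i hi
    have hi' : (i : ℕ) + 1 < n := (Finset.mem_filter.mp hi).2
    have h1 : uc ((conjH b a : Hsub n) : G n) (lastI n hn) = uc (a : G n) (lastI n hn) :=
      conjH_coe_u b a _
    rw [h1, vc_conjH hn b a' i hi', mul_add, zpow_add]
    rfl
  rw [Finset.prod_congr rfl key, Finset.prod_mul_distrib]
  exact mul_inv_eq_of_eq_mul (mul_comm _ _)

lemma g_add_right_central (hn : 0 < n) (lam : Fin n → Circle)
    (σH : Hsub n → Hsub n → Circle) (g : Hsub n → Gsub n → Circle)
    (hadm : AdmissiblePair n σH g)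
    (hσ : ∀ a' a : Hsub n, σH a' a =
      ∏ i ∈ Finset.univ.filter (fun i : Fin n => (i : ℕ) + 1 < n),
        lam i ^ (uc (a' : G n) (lastI n hn) * vc (a : G n) i (lastI n hn)))
    (a a' : Hsub n) (b : Gsub n) (ha' : uc (a' : G n) (lastI n hn) = 0) :
    g (a * a') b = g a b * g a' b := by
  rw [g_add_formula hn lam σH g hadm hσ a a' b, ha']
  simp

lemma g_add_b_u_zero (hn : 0 < n) (lam : Fin n → Circle)
    (σH : Hsub n → Hsub n → Circle) (g : Hsub n → Gsub n → Circle)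
    (hadm : AdmissiblePair n σH g)
    (hσ : ∀ a' a : Hsub n, σH a' a =
      ∏ i ∈ Finset.univ.filter (fun i : Fin n => (i : ℕ) + 1 < n),
        lam i ^ (uc (a' : G n) (lastI n hn) * vc (a : G n) i (lastI n hn)))
    (a a' : Hsub n) (b : Gsub n) (hb : ∀ i, uc (b : G n) i = 0) :
    g (a * a') b = g a b * g a' b := by
  rw [g_add_formula hn lam σH g hadm hσ a a' b]
  have : ∀ i ∈ Finset.univ.filter (fun i : Fin n => (i : ℕ) + 1 < n),
      lam i ^ (uc (a : G n) (lastI n hn) * (uc (b : G n) i * uc (a' : G n) (lastI n hn))) = 1 := by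
    intro i _
    rw [hb i, zero_mul, mul_zero, zpow_zero]
  rw [Finset.prod_eq_one this, one_mul]

lemma g_central_mul (σH : Hsub n → Hsub n → Circle) (g : Hsub n → Gsub n → Circle)
    (hadm : AdmissiblePair n σH g) (c : Hsub n) (hc : ∀ i, (c : G n).u i = 0)
    (b b' : Gsub n) : g c (b * b') = g c b * g c b' := by
  rw [hadm.g_mul]
  have : conjH b' c = c := by
    refine Subtype.ext (G.ext ?_ ?_) <;> funext x
    · exact conjH_coe_u _ _ _
    · rw [conjH_coe_v, hc, mul_zero, add_zero]
  rw [this]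

lemma g_central_inv (σH : Hsub n → Hsub n → Circle) (g : Hsub n → Gsub n → Circle)
    (hadm : AdmissiblePair n σH g) (c : Hsub n) (hc : ∀ i, (c : G n).u i = 0)
    (b : Gsub n) : g c b⁻¹ = (g c b)⁻¹ := by
  have h1 := g_central_mul σH g hadm c hc b b⁻¹
  rw [mul_inv_cancel, hadm.g_one_right] at h1
  exact eq_inv_of_mul_eq_one_left (by rw [mul_comm]; exact h1.symm)

lemma g_central_zGOf (σH : Hsub n → Hsub n → Circle) (g : Hsub n → Gsub n → Circle)
    (hadm : AdmissiblePair n σH g) (c : Hsub n) (hc : ∀ i, (c : G n).u i = 0)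
    (f : PairIdx n → ℤ) : g c (zGOf f) = 1 := by
  have hφ : ∀ f f' : PairIdx n → ℤ,
      g c (zGOf (f + f')) = g c (zGOf f) * g c (zGOf f') := by
    intro f f'
    rw [zGOf_add, g_central_mul σH g hadm c hc]
  rw [pihom_eq_prod (fun f => g c (zGOf f)) hφ f]
  refine Finset.prod_eq_one fun p _ => ?_
  suffices h : g c (zGOf (Pi.single p 1)) = 1 by rw [h, one_zpow]
  by_cases hp : (p.1.2 : ℕ) + 1 < n
  · rw [zGOf_single_of_lt p hp]
    have hi : (p.1.1 : ℕ) + 1 < n := pair_fst_lt p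
    rw [vijG_comm p.1.1 p.1.2 p.2 hi hp]
    rw [g_central_mul σH g hadm c hc, g_central_mul σH g hadm c hc,
      g_central_mul σH g hadm c hc, g_central_inv σH g hadm c hc,
      g_central_inv σH g hadm c hc]
    set x := g c (uiG p.1.1 hi)
    set y := g c (uiG p.1.2 hp)
    rw [mul_comm x y, mul_assoc y x, mul_inv_cancel, mul_one, mul_inv_cancel]
  · rw [zGOf_single_of_eq p hp, hadm.g_one_right]

lemma g_central_eval (σH : Hsub n → Hsub n → Circle) (g : Hsub n → Gsub n → Circle)
    (hadm : AdmissiblePair n σH g) (c : Hsub n) (hc : ∀ i, (c : G n).u i = 0)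
    (b : Gsub n) :
    g c b = ∏ j : Fin n,
      (if hj : (j : ℕ) + 1 < n then g c (uiG j hj) else 1) ^ ((b : G n).u j) := by
  have hw : ∀ f f' : Fin n → ℤ,
      g c (wGOf (f + f')) = g c (wGOf f) * g c (wGOf f') := by
    intro f f'
    rw [← g_central_mul σH g hadm c hc, wGOf_mul, g_central_mul σH g hadm c hc,
      g_central_zGOf σH g hadm c hc, mul_one]
  conv_lhs => rw [decompG b]
  rw [g_central_mul σH g hadm c hc, g_central_zGOf σH g hadm c hc, mul_one]
  rw [pihom_eq_prod (fun f => g c (wGOf f)) hw]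
  refine Finset.prod_congr rfl fun j _ => ?_
  by_cases hj : (j : ℕ) + 1 < n
  · rw [dif_pos hj, wGOf_single_of_lt j hj]
  · rw [dif_neg hj, wGOf_single_of_eq j hj, hadm.g_one_right]

lemma g_zHOf_ui (hn : 0 < n) (lam : Fin n → Circle)
    (σH : Hsub n → Hsub n → Circle) (g : Hsub n → Gsub n → Circle)
    (hadm : AdmissiblePair n σH g)
    (hσ : ∀ a' a : Hsub n, σH a' a =
      ∏ i ∈ Finset.univ.filter (fun i : Fin n => (i : ℕ) + 1 < n),
        lam i ^ (uc (a' : G n) (lastI n hn) * vc (a : G n) i (lastI n hn)))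
    (f : Fin n → ℤ) (j : Fin n) (hj : (j : ℕ) + 1 < n) :
    g (zHOf f) (uiG j hj) = ∏ i : Fin n, (gvu g i j) ^ (f i) := by
  have hφ : ∀ f f' : Fin n → ℤ,
      g (zHOf (f + f')) (uiG j hj) = g (zHOf f) (uiG j hj) * g (zHOf f') (uiG j hj) := by
    intro f f'
    rw [zHOf_add, g_add_right_central hn lam σH g hadm hσ (zHOf f) (zHOf f') (uiG j hj) rfl]
  rw [pihom_eq_prod (fun f => g (zHOf f) (uiG j hj)) hφ f]
  refine Finset.prod_congr rfl fun i _ => ?_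
  congr 1
  by_cases hi : (i : ℕ) + 1 < n
  · rw [zHOf_single_of_lt hn i hi]
    rw [gvu, dif_pos (⟨hi, hj⟩ : (i : ℕ) + 1 < n ∧ (j : ℕ) + 1 < n)]
  · rw [zHOf_single_of_eq i hi, hadm.g_one_left]
    rw [gvu, dif_neg (fun h => hi h.1)]

lemma central_eq_zHOf (hn : 0 < n) (c : Hsub n) (hc : ∀ i, (c : G n).u i = 0) :
    c = zHOf (fun i => vc (c : G n) i (lastI n hn)) := by
  have h1 : zH c = c := by
    refine Subtype.ext (G.ext ?_ ?_) <;> funext x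
    · exact (hc x).symm
    · rfl
  calc c = zH c := h1.symm
    _ = _ := zH_eq_zHOf hn c

lemma g_central_master (hn : 0 < n) (lam : Fin n → Circle)
    (σH : Hsub n → Hsub n → Circle) (g : Hsub n → Gsub n → Circle)
    (hadm : AdmissiblePair n σH g)
    (hσ : ∀ a' a : Hsub n, σH a' a =
      ∏ i ∈ Finset.univ.filter (fun i : Fin n => (i : ℕ) + 1 < n),
        lam i ^ (uc (a' : G n) (lastI n hn) * vc (a : G n) i (lastI n hn)))
    (c : Hsub n) (hc : ∀ i, (c : G n).u i = 0) (b : Gsub n) :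
    g c b = ∏ i : Fin n, ∏ j : Fin n,
      gvu g i j ^ (vc (c : G n) i (lastI n hn) * uc (b : G n) j) := by
  rw [Finset.prod_comm, g_central_eval σH g hadm c hc b]
  refine Finset.prod_congr rfl fun j _ => ?_
  by_cases hj : (j : ℕ) + 1 < n
  · rw [dif_pos hj]
    conv_lhs => rw [central_eq_zHOf hn c hc]
    rw [g_zHOf_ui hn lam σH g hadm hσ _ j hj]
    rw [← Finset.prod_zpow]
    exact Finset.prod_congr rfl fun i _ => (zpow_mul _ _ _).symm
  · rw [dif_neg hj, one_zpow]
    symm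
    refine Finset.prod_eq_one fun i _ => ?_
    rw [gvu, dif_neg (fun h => hj h.2), one_zpow]

lemma prod_restrict (hn : 0 < n) (g : Hsub n → Gsub n → Circle)
    (E : Fin n → Fin n → ℤ) (hE : ∀ i : Fin n, ¬((i : ℕ) + 1 < n) → ∀ j : Fin n, E i j = 0) :
    (∏ i : Fin n, ∏ j : Fin n, gvu g i j ^ (E i j)) =
    ∏ i ∈ Finset.univ.filter (fun i : Fin n => (i : ℕ) + 1 < n),
      ∏ j ∈ Finset.univ.filter (fun j : Fin n => (j : ℕ) + 1 < n),
        gvu g i j ^ (E i j) := by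
  have inner : ∀ i : Fin n, (∏ j : Fin n, gvu g i j ^ E i j) =
      ∏ j ∈ Finset.univ.filter (fun j : Fin n => (j : ℕ) + 1 < n), gvu g i j ^ E i j := by
    intro i
    symm
    apply Finset.prod_subset (Finset.filter_subset _ _)
    intro j _ hj
    have hj' : ¬((j : ℕ) + 1 < n) := by simpa using hj
    rw [gvu, dif_neg (fun h => hj' h.2), one_zpow]
  calc (∏ i : Fin n, ∏ j : Fin n, gvu g i j ^ E i j)
      = ∏ i : Fin n, ∏ j ∈ Finset.univ.filter (fun j : Fin n => (j : ℕ) + 1 < n),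
          gvu g i j ^ E i j := Finset.prod_congr rfl fun i _ => inner i
    _ = _ := by
        symm
        apply Finset.prod_subset (Finset.filter_subset _ _)
        intro i _ hi
        have hi' : ¬((i : ℕ) + 1 < n) := by simpa using hi
        refine Finset.prod_eq_one fun j _ => ?_
        rw [hE i hi' j, zpow_zero]

end GLemmas

/-- the values of `g` on the `z`-parts. -/
theorem g_z_parts (n : ℕ) (hn : 2 ≤ n) (lam : Fin n → Circle)
    (σH : Hsub n → Hsub n → Circle) (g : Hsub n → Gsub n → Circle)
    (hnorm : Normalized (show 0 < n by omega) σH g lam) :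
    (∀ (a : Hsub n) (b : Gsub n),
      g (zH a) (wG b) =
        ∏ i ∈ Finset.univ.filter (fun i : Fin n => (i : ℕ) + 1 < n),
          ∏ j ∈ Finset.univ.filter (fun j : Fin n => (j : ℕ) + 1 < n),
            gvu g i j ^ (vc (a : G n) i (lastI n (by omega)) * uc (b : G n) j)) ∧
    (∀ (i j : Fin n) (hij : (i : ℕ) < (j : ℕ)) (hj : (j : ℕ) + 1 < n),
      g (vinH j hj) (uiG i (by omega)) =
        g (unH (by omega)) (vijG i j hj) * g (vinH i (by omega)) (uiG j hj)) ∧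
    (∀ (a : Hsub n) (b : Gsub n),
      g (wH a) (zG b) =
        (∏ p ∈ Finset.univ.filter
            (fun p : Fin n × Fin n => p.1 < p.2 ∧ (p.2 : ℕ) + 1 < n),
          guv g p.1 p.2 ^ (uc (a : G n) (lastI n (by omega)) * vc (b : G n) p.1 p.2)) ∧
      g (wH a) (zG b) =
        ∏ p ∈ Finset.univ.filter
            (fun p : Fin n × Fin n => p.1 < p.2 ∧ (p.2 : ℕ) + 1 < n),
          ((gvu g p.1 p.2)⁻¹ * gvu g p.2 p.1) ^
            (uc (a : G n) (lastI n (by omega)) * vc (b : G n) p.1 p.2)) ∧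
    ∀ (a : Hsub n) (b b' : Gsub n),
      g a (b * b') =
        (∏ i ∈ Finset.univ.filter (fun i : Fin n => (i : ℕ) + 1 < n),
          ∏ j ∈ Finset.univ.filter (fun j : Fin n => (j : ℕ) + 1 < n),
            gvu g i j ^ (uc (b' : G n) i * uc (b : G n) j *
              uc (a : G n) (lastI n (by omega)))) *
        (g a b * g a b') := by
  have hn0 : 0 < n := by omega
  obtain ⟨hadm, hσ, hgu⟩ := hnorm
  -- Part (ii), proved first since it is used in part (iii).
  have part2 : ∀ (i j : Fin n) (hij : (i : ℕ) < (j : ℕ)) (hj : (j : ℕ) + 1 < n),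
      g (vinH j hj) (uiG i (by omega)) =
        g (unH (by omega)) (vijG i j hj) * g (vinH i (by omega)) (uiG j hj) := by
    intro i j hij hj
    have hi : (i : ℕ) + 1 < n := by omega
    have e1 : g (unH hn0) (uiG i hi * uiG j hj) = g (vinH j hj) (uiG i hi) := by
      rw [hadm.g_mul, conjH_unH hn0 j hj,
        g_add_right_central hn0 lam σH g hadm hσ (unH hn0) (vinH j hj) (uiG i hi) rfl,
        hgu i hi, hgu j hj, one_mul, mul_one]
    have e2 : g (unH hn0) (uiG i hi * uiG j hj) =
        g (vinH i hi) (uiG j hj) * g (unH hn0) (vijG i j hj) := by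
      rw [uiG_swap i j hij hi hj,
        hadm.g_mul (unH hn0) (uiG j hj * uiG i hi) (vijG i j hj),
        conjH_vijG hn0 i j hj,
        hadm.g_mul (unH hn0) (uiG j hj) (uiG i hi),
        conjH_unH hn0 i hi,
        g_add_right_central hn0 lam σH g hadm hσ (unH hn0) (vinH i hi) (uiG j hj) rfl,
        hgu j hj, hgu i hi, one_mul, mul_one]
    have e3 := e1.symm.trans e2
    rw [mul_comm] at e3
    exact e3
  refine ⟨?_, part2, ?_, ?_⟩
  -- Part (i)
  · intro a b
    refine (g_central_master hn0 lam σH g hadm hσ (zH a) (fun _ => rfl) (wG b)).trans ?_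
    exact prod_restrict hn0 g
      (fun i j => vc ((zH a : Hsub n) : G n) i (lastI n hn0) * uc ((wG b : Gsub n) : G n) j)
      (fun (i : Fin n) (hi : ¬((i : ℕ) + 1 < n)) (j : Fin n) => by
        show vc ((zH a : Hsub n) : G n) i (lastI n hn0) * uc ((wG b : Gsub n) : G n) j = 0
        rw [vc_last_last hn0 _ i hi, zero_mul])
  -- Part (iii)
  · intro a b
    have h3a : g (wH a) (zG b) =
        ∏ p ∈ Finset.univ.filter
            (fun p : Fin n × Fin n => p.1 < p.2 ∧ (p.2 : ℕ) + 1 < n),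
          guv g p.1 p.2 ^ (uc (a : G n) (lastI n hn0) * vc (b : G n) p.1 p.2) := by
      have hψ : ∀ f f' : PairIdx n → ℤ,
          g (wH a) (zGOf (f + f')) = g (wH a) (zGOf f) * g (wH a) (zGOf f') := by
        intro f f'
        rw [zGOf_add, hadm.g_mul, conjH_of_b_u_zero (fun _ => rfl)]
      rw [zG_eq_zGOf b, pihom_eq_prod (fun f => g (wH a) (zGOf f)) hψ]
      have hterm : ∀ p : PairIdx n,
          g (wH a) (zGOf (Pi.single p 1)) ^ ((b : G n).v p) =
          guv g p.1.1 p.1.2 ^ (uc (a : G n) (lastI n hn0) * (b : G n).v p) := by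
        intro p
        by_cases hp : (p.1.2 : ℕ) + 1 < n
        · rw [zGOf_single_of_lt p hp]
          have hpow : g (wH a) (vijG p.1.1 p.1.2 hp) =
              g (unHpow 1) (vijG p.1.1 p.1.2 hp) ^ (uc (a : G n) (lastI n hn0)) := by
            rw [wH_eq_unHpow hn0 a]
            exact zhom_eq_zpow (fun m => g (unHpow m) (vijG p.1.1 p.1.2 hp))
              (fun x y => by
                show g (unHpow (x + y)) (vijG p.1.1 p.1.2 hp) =
                  g (unHpow x) (vijG p.1.1 p.1.2 hp) * g (unHpow y) (vijG p.1.1 p.1.2 hp)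
                rw [unHpow_add,
                  g_add_b_u_zero hn0 lam σH g hadm hσ (unHpow x) (unHpow y)
                    (vijG p.1.1 p.1.2 hp) (fun _ => rfl)]) _
          rw [hpow, unHpow_one hn0, ← zpow_mul]
          congr 1
          rw [guv, dif_pos hp]
        · rw [zGOf_single_of_eq p hp, hadm.g_one_right, one_zpow, guv, dif_neg hp,
            one_zpow]
      rw [Finset.prod_congr rfl (fun p _ => hterm p)]
      symm
      have hsub : Finset.univ.filter
            (fun q : Fin n × Fin n => q.1 < q.2 ∧ (q.2 : ℕ) + 1 < n) ⊆
          Finset.univ.filter (fun q : Fin n × Fin n => q.1 < q.2) :=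
        Finset.monotone_filter_right _ (fun q _ hq => hq.1)
      calc (∏ p ∈ Finset.univ.filter
              (fun p : Fin n × Fin n => p.1 < p.2 ∧ (p.2 : ℕ) + 1 < n),
            guv g p.1 p.2 ^ (uc (a : G n) (lastI n hn0) * vc (b : G n) p.1 p.2))
          = ∏ p ∈ Finset.univ.filter (fun q : Fin n × Fin n => q.1 < q.2),
            guv g p.1 p.2 ^ (uc (a : G n) (lastI n hn0) * vc (b : G n) p.1 p.2) := by
            apply Finset.prod_subset hsub
            intro q hq hq'
            have h1 : q.1 < q.2 := by simpa using (Finset.mem_filter.mp hq).2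
            have h2 : ¬((q.2 : ℕ) + 1 < n) := by
              intro h2
              exact hq' (Finset.mem_filter.mpr ⟨Finset.mem_univ _, h1, h2⟩)
            rw [guv, dif_neg h2, one_zpow]
        _ = ∏ p : PairIdx n,
            guv g p.1.1 p.1.2 ^ (uc (a : G n) (lastI n hn0) * vc (b : G n) p.1.1 p.1.2) := by
            apply Finset.prod_subtype
            intro q
            simp
        _ = ∏ p : PairIdx n,
            guv g p.1.1 p.1.2 ^ (uc (a : G n) (lastI n hn0) * (b : G n).v p) := by
            refine Finset.prod_congr rfl fun p _ => ?_
            congr 2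
            rw [vc, dif_pos p.2]
    refine ⟨h3a, h3a.trans ?_⟩
    refine Finset.prod_congr rfl fun q hq => ?_
    obtain ⟨-, hq1, hq2⟩ := Finset.mem_filter.mp hq
    have hq1' : (q.1 : ℕ) + 1 < n := by
      have : (q.1 : ℕ) < (q.2 : ℕ) := hq1
      omega
    congr 1
    have hX : gvu g q.2 q.1 = guv g q.1 q.2 * gvu g q.1 q.2 := by
      rw [gvu, dif_pos (⟨hq2, hq1'⟩ : (q.2 : ℕ) + 1 < n ∧ (q.1 : ℕ) + 1 < n),
        guv, dif_pos hq2,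
        gvu, dif_pos (⟨hq1', hq2⟩ : (q.1 : ℕ) + 1 < n ∧ (q.2 : ℕ) + 1 < n)]
      exact part2 q.1 q.2 hq1 hq2
    rw [hX, mul_comm (guv g q.1 q.2) _, inv_mul_cancel_left]
  -- Part (iv)
  · intro a b b'
    rw [hadm.g_mul a b b', conjH_eq_mul hn0 b' a,
      g_add_right_central hn0 lam σH g hadm hσ a
        (zHOf (fun i => uc (b' : G n) i * uc (a : G n) (lastI n hn0))) b rfl,
      g_central_master hn0 lam σH g hadm hσ
        (zHOf (fun i => uc (b' : G n) i * uc (a : G n) (lastI n hn0))) (fun _ => rfl) b]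
    have hprod : (∏ i : Fin n, ∏ j : Fin n,
        gvu g i j ^ (vc ((zHOf (fun i => uc (b' : G n) i *
          uc (a : G n) (lastI n hn0)) : Hsub n) : G n) i (lastI n hn0) * uc (b : G n) j)) =
        ∏ i ∈ Finset.univ.filter (fun i : Fin n => (i : ℕ) + 1 < n),
          ∏ j ∈ Finset.univ.filter (fun j : Fin n => (j : ℕ) + 1 < n),
            gvu g i j ^ (uc (b' : G n) i * uc (b : G n) j * uc (a : G n) (lastI n hn0)) := by
      refine (prod_restrict hn0 g
        (fun i j => vc ((zHOf (fun i => uc (b' : G n) i *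
          uc (a : G n) (lastI n hn0)) : Hsub n) : G n) i (lastI n hn0) *
          uc ((b : Gsub n) : G n) j)
        (fun (i : Fin n) (hi : ¬((i : ℕ) + 1 < n)) (j : Fin n) => by
          show vc ((zHOf (fun i => uc (b' : G n) i *
            uc (a : G n) (lastI n hn0)) : Hsub n) : G n) i (lastI n hn0) *
            uc ((b : Gsub n) : G n) j = 0
          rw [vc_last_last hn0 _ i hi, zero_mul])).trans ?_
      refine Finset.prod_congr rfl fun i hi => Finset.prod_congr rfl fun j hj => ?_
      have hi' : (i : ℕ) + 1 < n := (Finset.mem_filter.mp hi).2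
      rw [vc_zHOf_of_lt hn0 _ i hi']
      congr 1
      ring
    rw [hprod, mul_comm (g a b) _, mul_assoc]

end FreeNilp
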